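/- arXiv:1912.02865 — 3 statements merged into one kernel-verified Lean document; each statement's English description precedes it below -/
import Mathlib

section
/- If T is maximal p-cyclically monotone and also q-cyclically monotone for some q > p, then T is maximal q-cyclically monotone. -/
open scoped BigOperators

/-- The cyclic sum `∑_{i=0}^{p} ⟨x_{i+1} - x_i, x_i*⟩` (indices mod `p+1`). -/
def cycSum {X : Type*} [NormedAddCommGroup X] [NormedSpace ℝ X] (p : ℕ)
    (z : Fin (p + 1) → X × (X →L[ℝ] ℝ)) : ℝ :=
  ∑ i, (z i).2 ((z (i + 1)).1 - (z i).1)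

/-- `T` (identified with its graph) is `p`-cyclically monotone. -/
def CycMono {X : Type*} [NormedAddCommGroup X] [NormedSpace ℝ X] (p : ℕ)
    (T : Set (X × (X →L[ℝ] ℝ))) : Prop :=
  ∀ z : Fin (p + 1) → X × (X →L[ℝ] ℝ), (∀ i, z i ∈ T) → cycSum p z ≤ 0

/-- `T` is maximal `p`-cyclically monotone: it is `p`-cyclically monotone and its graph
is not properly contained in the graph of another `p`-cyclically monotone operator. -/
def MaxCycMono {X : Type*} [NormedAddCommGroup X] [NormedSpace ℝ X] (p : ℕ)
    (T : Set (X × (X →L[ℝ] ℝ))) : Prop :=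
  CycMono p T ∧ ∀ S : Set (X × (X →L[ℝ] ℝ)), CycMono p S → T ⊆ S → S = T

lemma fin_add_one_val {n : ℕ} (i : Fin (n+1)) :
    ((i + 1 : Fin (n+1)) : ℕ) = (i.val + 1) % (n+1) := by
  rw [Fin.add_def]
  simp only [Fin.val_one']
  conv_rhs => rw [Nat.add_mod, Nat.mod_eq_of_lt i.isLt]

lemma cycSum_eq_range {X : Type*} [NormedAddCommGroup X] [NormedSpace ℝ X] (p : ℕ)
    (Z : ℕ → X × (X →L[ℝ] ℝ)) (hper : ∀ n, Z (n % (p+1)) = Z n) :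
    cycSum p (fun i => Z i.val) = ∑ n ∈ Finset.range (p+1),
      (Z n).2 ((Z (n+1)).1 - (Z n).1) := by
  rw [cycSum, ← Fin.sum_univ_eq_sum_range (fun n => (Z n).2 ((Z (n+1)).1 - (Z n).1)) (p+1)]
  apply Finset.sum_congr rfl
  intro i _
  have h : Z ((i + 1 : Fin (p+1)) : ℕ) = Z (i.val + 1) := by
    rw [fin_add_one_val, hper]
  rw [h]

lemma cycMono_of_le {X : Type*} [NormedAddCommGroup X] [NormedSpace ℝ X]
    {p q : ℕ} (hpq : p ≤ q) {S : Set (X × (X →L[ℝ] ℝ))}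
    (hS : CycMono q S) : CycMono p S := by
  intro z hz
  set Z : ℕ → X × (X →L[ℝ] ℝ) := fun n => z ⟨n % (p + 1), Nat.mod_lt _ (Nat.succ_pos p)⟩
    with hZdef
  have hZper : ∀ n, Z (n % (p+1)) = Z n := by
    intro n; simp [hZdef, Nat.mod_mod_of_dvd _ dvd_rfl]
  set W : ℕ → X × (X →L[ℝ] ℝ) := fun n => Z (min (n % (q+1)) p) with hWdef
  have hWper : ∀ n, W (n % (q+1)) = W n := by
    intro n; simp [hWdef, Nat.mod_mod_of_dvd _ dvd_rfl]
  have hzZ : z = fun i : Fin (p+1) => Z i.val := by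
    funext i; simp [hZdef, Nat.mod_eq_of_lt i.isLt]
  have hwS : ∀ j : Fin (q+1), W j.val ∈ S := by
    intro j
    have := hz ⟨min (j.val % (q+1)) p, by omega⟩
    simpa [hWdef, hZdef, Nat.mod_eq_of_lt (show min (j.val % (q+1)) p < p + 1 by omega)]
      using this
  have hle := hS (fun j => W j.val) hwS
  have hWsum := cycSum_eq_range q W hWper
  have hZsum := cycSum_eq_range p Z hZper
  rw [hzZ, hZsum]
  rw [hWsum] at hle
  -- now compute the W-sum equals the Z-sum
  have key : ∑ n ∈ Finset.range (q+1), (W n).2 ((W (n+1)).1 - (W n).1)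
      = ∑ n ∈ Finset.range (p+1), (Z n).2 ((Z (n+1)).1 - (Z n).1) := by
    rw [Finset.sum_range_succ, Finset.sum_range_succ]
    have hsplit : Finset.range q = Finset.range p ∪ Finset.Ico p q := by
      rw [Finset.range_eq_Ico, Finset.range_eq_Ico]
      exact (Finset.Ico_union_Ico_eq_Ico (Nat.zero_le p) hpq).symm
    rw [hsplit, Finset.sum_union (by
      rw [Finset.range_eq_Ico]; exact Finset.Ico_disjoint_Ico_consecutive 0 p q)]
    have hmid : ∑ n ∈ Finset.Ico p q, (W n).2 ((W (n+1)).1 - (W n).1) = 0 := by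
      apply Finset.sum_eq_zero
      intro n hn
      rw [Finset.mem_Ico] at hn
      have h1 : W n = Z p := by
        simp [hWdef, Nat.mod_eq_of_lt (show n < q + 1 by omega), Nat.min_eq_right hn.1]
      have h2 : W (n+1) = Z p := by
        simp [hWdef, Nat.mod_eq_of_lt (show n + 1 < q + 1 by omega),
          Nat.min_eq_right (by omega : p ≤ n + 1)]
      rw [h1, h2, sub_self, map_zero]
    have hlow : ∑ n ∈ Finset.range p, (W n).2 ((W (n+1)).1 - (W n).1)
        = ∑ n ∈ Finset.range p, (Z n).2 ((Z (n+1)).1 - (Z n).1) := by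
      apply Finset.sum_congr rfl
      intro n hn
      rw [Finset.mem_range] at hn
      have h1 : W n = Z n := by
        simp [hWdef, Nat.mod_eq_of_lt (show n < q + 1 by omega),
          Nat.min_eq_left (by omega : n ≤ p)]
      have h2 : W (n+1) = Z (n+1) := by
        simp [hWdef, Nat.mod_eq_of_lt (show n + 1 < q + 1 by omega),
          Nat.min_eq_left (by omega : n + 1 ≤ p)]
      rw [h1, h2]
    have hlast : (W q).2 ((W (q+1)).1 - (W q).1) = (Z p).2 ((Z (p+1)).1 - (Z p).1) := by
      have h1 : W q = Z p := by
        simp [hWdef, Nat.mod_eq_of_lt (show q < q + 1 by omega), Nat.min_eq_right hpq]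
      have h2 : W (q+1) = Z 0 := by
        simp [hWdef, Nat.mod_self]
      have h3 : Z (p+1) = Z 0 := by
        simp [hZdef, Nat.mod_self]
      rw [h1, h2, h3]
    rw [hmid, hlow, hlast]
    ring
  rw [key] at hle
  exact hle

theorem maxCycMono_of_gt {X : Type*} [NormedAddCommGroup X] [NormedSpace ℝ X]
    (p q : ℕ) (T : Set (X × (X →L[ℝ] ℝ)))
    (hT : MaxCycMono p T) (hpq : p < q) (hq : CycMono q T) : MaxCycMono q T :=
  ⟨hq, fun S hS hTS => hT.2 S (cycMono_of_le hpq.le hS) hTS⟩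
end

section
/- Let S: X ⇉ X* be a p-cyclically monotone operator, let a ∈ dom(S^{μ_p}), and define T by graph(T) = ({a} × S^{μ_p}(a)) ∪ graph(S). Then T is p-cyclically monotone. -/
open scoped BigOperators

/-- The `p`-cyclically monotone polar of `T`: all pairs `(x₀, x₀*)` such that every cycle
starting at `(x₀, x₀*)` with the remaining `p` points in `T` has cyclic sum `≤ 0`. -/
def cycPolar {X : Type*} [NormedAddCommGroup X] [NormedSpace ℝ X] (p : ℕ)
    (T : Set (X × (X →L[ℝ] ℝ))) : Set (X × (X →L[ℝ] ℝ)) :=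
  {w | ∀ z : Fin (p + 1) → X × (X →L[ℝ] ℝ),
    z 0 = w → (∀ i, i ≠ 0 → z i ∈ T) → cycSum p z ≤ 0}

/-- Domain of a multivalued operator (graph). -/
def opDom {X Y : Type*} (T : Set (X × Y)) : Set X := {x | ∃ y, (x, y) ∈ T}

/-- Image of a multivalued operator (graph) at a point. -/
def opIm {X Y : Type*} (T : Set (X × Y)) (x : X) : Set Y := {y | (x, y) ∈ T}

section aux

variable {X : Type*} [NormedAddCommGroup X] [NormedSpace ℝ X]

/-- Sum of pairings along a chain, with final target `x`. -/
def segSum : List (X × (X →L[ℝ] ℝ)) → X → ℝ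
  | [], _ => 0
  | [c], x => c.2 (x - c.1)
  | c :: d :: l, x => c.2 (d.1 - c.1) + segSum (d :: l) x

/-- Cyclic sum of a list. -/
def csum : List (X × (X →L[ℝ] ℝ)) → ℝ
  | [] => 0
  | c :: l => segSum (c :: l) c.1

lemma segSum_cons_cons (c d : X × (X →L[ℝ] ℝ)) (l : List (X × (X →L[ℝ] ℝ))) (x : X) :
    segSum (c :: d :: l) x = c.2 (d.1 - c.1) + segSum (d :: l) x := rfl

lemma csum_cons (c : X × (X →L[ℝ] ℝ)) (l : List (X × (X →L[ℝ] ℝ))) :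
    csum (c :: l) = segSum (c :: l) c.1 := rfl

lemma segSum_append (l₁ : List (X × (X →L[ℝ] ℝ))) (c : X × (X →L[ℝ] ℝ))
    (l₂ : List (X × (X →L[ℝ] ℝ))) (x : X) :
    segSum (l₁ ++ c :: l₂) x = segSum l₁ c.1 + segSum (c :: l₂) x := by
  induction l₁ with
  | nil => simp [segSum]
  | cons d t ih =>
    cases t with
    | nil => simp [segSum]
    | cons e t' =>
      have : (d :: e :: t') ++ c :: l₂ = d :: ((e :: t') ++ c :: l₂) := by simp
      rw [this]
      have h2 : (e :: t') ++ c :: l₂ = e :: (t' ++ c :: l₂) := by simp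
      rw [h2, segSum_cons_cons, ← h2, ih, segSum_cons_cons]
      ring

lemma segSum_dup (c : X × (X →L[ℝ] ℝ)) (l : List (X × (X →L[ℝ] ℝ))) (x : X) :
    segSum (c :: c :: l) x = segSum (c :: l) x := by
  rw [segSum_cons_cons]; simp

lemma rep_cons (k : ℕ) (c : X × (X →L[ℝ] ℝ)) (l : List (X × (X →L[ℝ] ℝ))) :
    List.replicate k c ++ c :: l = c :: (List.replicate k c ++ l) := by
  have : List.replicate k c ++ c :: l = (List.replicate k c ++ [c]) ++ l := by simp
  rw [this, ← List.replicate_succ' (n := k) (a := c), List.replicate_succ]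
  simp

lemma segSum_replicate (k : ℕ) (c : X × (X →L[ℝ] ℝ)) (l : List (X × (X →L[ℝ] ℝ))) (x : X) :
    segSum (List.replicate k c ++ c :: l) x = segSum (c :: l) x := by
  induction k with
  | zero => simp
  | succ k ih =>
    rw [List.replicate_succ]
    have : (c :: List.replicate k c) ++ c :: l = c :: (List.replicate k c ++ c :: l) := by simp
    rw [this, rep_cons, segSum_dup, ← rep_cons, ih]

lemma csum_rotate (c : X × (X →L[ℝ] ℝ)) (l : List (X × (X →L[ℝ] ℝ))) :
    csum (c :: l) = csum (l ++ [c]) := by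
  cases l with
  | nil => rfl
  | cons d t =>
    rw [csum_cons, segSum_cons_cons]
    have : (d :: t) ++ [c] = d :: (t ++ [c]) := by simp
    rw [this, csum_cons, ← this]
    have h2 : (d :: t) ++ [c] = (d :: t) ++ c :: [] := rfl
    rw [h2, segSum_append]
    show c.2 (d.1 - c.1) + segSum (d :: t) c.1 = segSum (d :: t) c.1 + c.2 (d.1 - c.1)
    ring

lemma csum_comm (l₁ l₂ : List (X × (X →L[ℝ] ℝ))) :
    csum (l₁ ++ l₂) = csum (l₂ ++ l₁) := by
  induction l₁ generalizing l₂ with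
  | nil => simp
  | cons c t ih =>
    have : (c :: t) ++ l₂ = c :: (t ++ l₂) := by simp
    rw [this, csum_rotate, List.append_assoc, ih]
    simp

lemma csum_split (c b : X × (X →L[ℝ] ℝ)) (l₁ l₂ : List (X × (X →L[ℝ] ℝ))) (h : c.1 = b.1) :
    csum (c :: (l₁ ++ b :: l₂)) = csum (c :: l₁) + csum (b :: l₂) := by
  have : c :: (l₁ ++ b :: l₂) = (c :: l₁) ++ b :: l₂ := by simp
  rw [csum_cons, this, segSum_append, csum_cons, csum_cons, h]

lemma segSum_ofFn : ∀ (n : ℕ) (z : Fin (n + 1) → X × (X →L[ℝ] ℝ)) (x : X),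
    segSum (List.ofFn z) x =
      (∑ i : Fin n, (z i.castSucc).2 ((z i.succ).1 - (z i.castSucc).1))
        + (z (Fin.last n)).2 (x - (z (Fin.last n)).1) := by
  intro n
  induction n with
  | zero =>
    intro z x
    simp [List.ofFn_succ, segSum, Fin.last]
  | succ n ih =>
    intro z x
    rw [List.ofFn_succ]
    have h1 : List.ofFn (fun i : Fin (n+1) => z i.succ) =
        z 1 :: List.ofFn (fun i : Fin n => z i.succ.succ) := by
      rw [List.ofFn_succ]; rfl
    rw [h1, segSum_cons_cons, ← h1, ih (fun i => z i.succ) x]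
    rw [Fin.sum_univ_succ (fun i : Fin (n+1) => (z i.castSucc).2 ((z i.succ).1 - (z i.castSucc).1))]
    have hlast : (Fin.last n).succ = Fin.last (n + 1) := Fin.succ_last n
    have hc : ∀ i : Fin n, (i.succ.castSucc : Fin (n+2)) = i.castSucc.succ :=
      fun i => (Fin.succ_castSucc i).symm
    simp only [hlast, hc]
    have h0 : ((0 : Fin (n+1)).castSucc : Fin (n+2)) = 0 := rfl
    have h01 : ((0 : Fin (n+1)).succ : Fin (n+2)) = 1 := rfl
    rw [h0, h01]
    ring

lemma cycSum_eq_csum (p : ℕ) (z : Fin (p + 1) → X × (X →L[ℝ] ℝ)) :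
    cycSum p z = csum (List.ofFn z) := by
  have h1 : List.ofFn z = z 0 :: List.ofFn (fun i : Fin p => z i.succ) := List.ofFn_succ (f := z)
  rw [h1, csum_cons, ← h1, segSum_ofFn p z (z 0).1]
  rw [cycSum, Fin.sum_univ_castSucc (fun i : Fin (p+1) => (z i).2 ((z (i + 1)).1 - (z i).1))]
  congr 1
  · apply Finset.sum_congr rfl
    intro i _
    rw [Fin.coeSucc_eq_succ]
  · rw [Fin.last_add_one]

/-- From a list of length exactly `p+1`, build the `Fin` cycle. -/
lemma csum_eq_cycSum_of_length (p : ℕ) (l : List (X × (X →L[ℝ] ℝ))) (hl : l.length = p + 1) :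
    csum l = cycSum p (fun i : Fin (p+1) => l.get (Fin.cast hl.symm i)) := by
  set z : Fin (p+1) → X × (X →L[ℝ] ℝ) := fun i => l.get (Fin.cast hl.symm i) with hz
  rw [cycSum_eq_csum]
  congr 1
  apply List.ext_get
  · simp [hl]
  · intro n h1 h2
    rw [List.get_ofFn]
    rfl

lemma csum_le_allS (p : ℕ) (S : Set (X × (X →L[ℝ] ℝ))) (hS : CycMono p S)
    (l : List (X × (X →L[ℝ] ℝ))) (hlen : l.length ≤ p + 1) (hmem : ∀ w ∈ l, w ∈ S) :
    csum l ≤ 0 := by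
  cases l with
  | nil => simp [csum]
  | cons c t =>
    set k := p + 1 - (c :: t).length with hk
    set l' : List (X × (X →L[ℝ] ℝ)) := List.replicate k c ++ c :: t with hl'
    have hcs : csum l' = csum (c :: t) := by
      rw [hl', rep_cons, csum_cons, ← rep_cons, segSum_replicate, csum_cons]
    have hlen' : l'.length = p + 1 := by
      simp only [hl', List.length_append, List.length_replicate, hk]
      omega
    have hmem' : ∀ w ∈ l', w ∈ S := by
      intro w hw
      rw [hl', List.mem_append] at hw
      rcases hw with hw | hw
      · rw [List.eq_of_mem_replicate hw]; exact hmem c (by simp)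
      · exact hmem w hw
    rw [← hcs, csum_eq_cycSum_of_length p l' hlen']
    exact hS _ (fun i => hmem' _ (List.get_mem _ _))

lemma csum_le_polarHead (p : ℕ) (S : Set (X × (X →L[ℝ] ℝ))) (a : X)
    (w : X × (X →L[ℝ] ℝ)) (t : List (X × (X →L[ℝ] ℝ)))
    (hw : w ∈ ({a} : Set X) ×ˢ opIm (cycPolar p S) a)
    (ht : ∀ u ∈ t, u ∈ S) (hlen : (w :: t).length ≤ p + 1) :
    csum (w :: t) ≤ 0 := by
  have hwa : w.1 = a := hw.1
  have hwp : w ∈ cycPolar p S := by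
    have : (a, w.2) ∈ cycPolar p S := hw.2
    rwa [show (a, w.2) = w by rw [← hwa]] at this
  cases t with
  | nil =>
    simp [csum, segSum]
  | cons b t' =>
    set k := p + 1 - (w :: b :: t').length with hk
    set l' : List (X × (X →L[ℝ] ℝ)) := w :: (List.replicate k b ++ b :: t') with hl'
    have hcs : csum l' = csum (w :: b :: t') := by
      rw [hl', rep_cons, csum_cons, csum_cons, segSum_cons_cons, segSum_cons_cons,
        ← rep_cons, segSum_replicate]
    have hlen' : l'.length = p + 1 := by
      simp only [hl', List.length_cons, List.length_append, List.length_replicate, hk]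
      simp only [List.length_cons] at hlen ⊢
      omega
    rw [← hcs, csum_eq_cycSum_of_length p l' hlen']
    apply hwp
    · rfl
    · intro i hi
      have hival : (i : ℕ) ≠ 0 := fun h => hi (Fin.ext h)
      obtain ⟨j, hj⟩ := Nat.exists_eq_succ_of_ne_zero hival
      have hcast : ((Fin.cast hlen'.symm i : Fin l'.length) : ℕ) = (i : ℕ) := rfl
      have hlt : j + 1 < l'.length := by
        have h2 := (Fin.cast hlen'.symm i).isLt
        omega
      have hlen'' : l'.length = (List.replicate k b ++ b :: t').length + 1 := by
        rw [hl']; simp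
      have hjl : j < (List.replicate k b ++ b :: t').length := by omega
      have hget : l'.get (Fin.cast hlen'.symm i)
          = (List.replicate k b ++ b :: t').get ⟨j, hjl⟩ := by
        have he : (Fin.cast hlen'.symm i : Fin l'.length) = ⟨j + 1, hlt⟩ :=
          Fin.ext (by rw [hcast, hj])
        rw [he]
        rfl
      rw [hget]
      have hmem := List.get_mem (List.replicate k b ++ b :: t') ⟨j, hjl⟩
      rw [List.mem_append] at hmem
      rcases hmem with hm | hm
      · rw [List.eq_of_mem_replicate hm]; exact ht b (by simp)
      · exact ht _ hm

lemma csum_le_main (p : ℕ) (S : Set (X × (X →L[ℝ] ℝ))) (hS : CycMono p S) (a : X) :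
    ∀ (n : ℕ) (l : List (X × (X →L[ℝ] ℝ))), l.length ≤ n → l.length ≤ p + 1 →
      (∀ w ∈ l, w ∈ S ∨ w ∈ ({a} : Set X) ×ˢ opIm (cycPolar p S) a) → csum l ≤ 0 := by
  intro n
  induction n with
  | zero =>
    intro l hn _ _
    rw [List.length_eq_zero_iff.mp (Nat.le_zero.mp hn)]
    simp [csum]
  | succ n ih =>
    intro l hn hp hmem
    by_cases hall : ∀ w ∈ l, w ∈ S
    · exact csum_le_allS p S hS l hp hall
    · push_neg at hall
      obtain ⟨w, hwl, hwS⟩ := hall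
      have hwQ : w ∈ ({a} : Set X) ×ˢ opIm (cycPolar p S) a := (hmem w hwl).resolve_left hwS
      obtain ⟨l₁, l₂, rfl⟩ := List.append_of_mem hwl
      have hrot : csum (l₁ ++ w :: l₂) = csum (w :: (l₂ ++ l₁)) := by
        rw [csum_comm]; simp
      rw [hrot]
      set m := l₂ ++ l₁ with hm
      have hmmem : ∀ u ∈ m, u ∈ S ∨ u ∈ ({a} : Set X) ×ˢ opIm (cycPolar p S) a := by
        intro u hu
        apply hmem
        rw [hm, List.mem_append] at hu
        rcases hu with hu | hu
        · simp [hu]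
        · simp [hu]
      have hlen_m : (w :: m).length = (l₁ ++ w :: l₂).length := by
        simp [hm]; omega
      by_cases htail : ∀ u ∈ m, u ∈ S
      · exact csum_le_polarHead p S a w m hwQ htail (by omega)
      · push_neg at htail
        obtain ⟨b, hbm, hbS⟩ := htail
        have hbQ : b ∈ ({a} : Set X) ×ˢ opIm (cycPolar p S) a := (hmmem b hbm).resolve_left hbS
        obtain ⟨t₁, t₂, hsplit⟩ := List.append_of_mem hbm
        rw [hsplit, csum_split w b t₁ t₂ (by rw [hwQ.1, hbQ.1])]
        have hlens : t₁.length + t₂.length + 1 = m.length := by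
          rw [hsplit]; simp; omega
        have hl1 : (w :: t₁).length ≤ n := by
          simp only [List.length_cons]
          simp only [List.length_append, List.length_cons] at hn hlen_m
          omega
        have hl2 : (b :: t₂).length ≤ n := by
          simp only [List.length_cons]
          simp only [List.length_append, List.length_cons] at hn hlen_m
          omega
        have hp1 : (w :: t₁).length ≤ p + 1 := by
          simp only [List.length_cons]
          simp only [List.length_append, List.length_cons] at hp hlen_m
          omega
        have hp2 : (b :: t₂).length ≤ p + 1 := by
          simp only [List.length_cons]
          simp only [List.length_append, List.length_cons] at hp hlen_m
          omega
        have c1 : csum (w :: t₁) ≤ 0 := by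
          apply ih _ hl1 hp1
          intro u hu
          rcases List.mem_cons.mp hu with rfl | hu
          · exact Or.inr hwQ
          · exact hmmem u (by rw [hsplit]; simp [hu])
        have c2 : csum (b :: t₂) ≤ 0 := by
          apply ih _ hl2 hp2
          intro u hu
          rcases List.mem_cons.mp hu with rfl | hu
          · exact Or.inr hbQ
          · exact hmmem u (by rw [hsplit]; simp [hu])
        linarith

end aux

theorem cycMono_union_polar_fiber {X : Type*} [NormedAddCommGroup X] [NormedSpace ℝ X]
    (p : ℕ) (S : Set (X × (X →L[ℝ] ℝ))) (hS : CycMono p S) (a : X)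
    (ha : a ∈ opDom (cycPolar p S)) :
    CycMono p (({a} ×ˢ opIm (cycPolar p S) a) ∪ S) := by
  intro z hz
  rw [cycSum_eq_csum]
  apply csum_le_main p S hS a (p + 1) (List.ofFn z) (by simp) (by simp)
  intro w hw
  obtain ⟨i, rfl⟩ := (List.mem_ofFn (f := z) (a := w)).mp hw
  exact (hz i).symm.imp id id |>.symm.elim (fun h => Or.inr h) (fun h => Or.inl h)
end

section
/- Let x_1,...,x_n ∈ X, C = co({x_1,...,x_n}), S_n = {λ ∈ ℝ^n : λ_i ≥ 0, ∑λ_i = 1}, and F: S_n → C defined by F(λ) = ∑_{i=1}^n λ_i x_i. Then F is an open map: for every U ⊆ S_n open in the subspace topology of S_n, F(U) is open in the subspace topology of C. -/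
open scoped BigOperators
open Set Filter Topology Metric

private lemma convComb_continuous {X : Type*} [NormedAddCommGroup X] [NormedSpace ℝ X]
    {n : ℕ} (x : Fin n → X) :
    Continuous (fun l : Fin n → ℝ => ∑ i, l i • x i) :=
  continuous_finset_sum _ fun i _ => (continuous_apply i).smul continuous_const

private lemma convComb_image_stdSimplex {X : Type*} [NormedAddCommGroup X] [NormedSpace ℝ X]
    {n : ℕ} (x : Fin n → X) :
    (fun l : Fin n → ℝ => ∑ i, l i • x i) '' stdSimplex ℝ (Fin n)
      = convexHull ℝ (Set.range x) := by
  have hfun : (fun l : Fin n → ℝ => ∑ i, l i • x i)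
      = ⇑(Fintype.linearCombination ℝ x) := by
    ext l; simp [Fintype.linearCombination_apply]
  rw [hfun, ← convexHull_basis_eq_stdSimplex, LinearMap.image_convexHull, ← Set.range_comp]
  congr 1
  ext i
  simp [Fintype.linearCombination_apply, Function.comp, ite_smul]

private lemma convComb_open_at {X : Type*} [NormedAddCommGroup X] [NormedSpace ℝ X]
    {n : ℕ} (x : Fin n → X) (lam : Fin n → ℝ) (hlam : lam ∈ stdSimplex ℝ (Fin n))
    {ε : ℝ} (hε : 0 < ε) :
    ∃ r > 0, ∀ c ∈ convexHull ℝ (Set.range x), dist c (∑ i, lam i • x i) < r →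
      ∃ μ ∈ stdSimplex ℝ (Fin n), (∑ i, μ i • x i) = c ∧ dist μ lam < ε := by
  by_contra h
  push_neg at h
  set f := fun l : Fin n → ℝ => ∑ i, l i • x i with hf
  have hc : ∀ k : ℕ, ∃ c ∈ convexHull ℝ (Set.range x),
      dist c (f lam) < 1/((k:ℝ)+1) ∧
        ∀ μ ∈ stdSimplex ℝ (Fin n), f μ = c → ε ≤ dist μ lam := by
    intro k
    obtain ⟨c, hc1, hc2, hc3⟩ := h (1/((k:ℝ)+1)) (by positivity)
    exact ⟨c, hc1, hc2, hc3⟩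
  choose c hcC hcd hcfar using hc
  have hfib : ∀ k : ℕ, ∃ μ ∈ stdSimplex ℝ (Fin n) ∩ f ⁻¹' {c k},
      ∀ ν ∈ stdSimplex ℝ (Fin n) ∩ f ⁻¹' {c k}, dist μ lam ≤ dist ν lam := by
    intro k
    have hne : (stdSimplex ℝ (Fin n) ∩ f ⁻¹' {c k}).Nonempty := by
      have : c k ∈ f '' stdSimplex ℝ (Fin n) := by
        rw [hf, convComb_image_stdSimplex x]; exact hcC k
      obtain ⟨μ, hμ, hμ'⟩ := this
      exact ⟨μ, hμ, by simp [hμ']⟩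
    have hcpt : IsCompact (stdSimplex ℝ (Fin n) ∩ f ⁻¹' {c k}) :=
      (isCompact_stdSimplex ℝ _).inter_right
        (isClosed_singleton.preimage (convComb_continuous x))
    obtain ⟨μ, hμ, hmin⟩ := hcpt.exists_isMinOn hne
      ((continuous_id.dist continuous_const).continuousOn)
    exact ⟨μ, hμ, fun ν hν => hmin hν⟩
  choose μ hμmem hμmin using hfib
  have hμS : ∀ k, μ k ∈ stdSimplex ℝ (Fin n) := fun k => (hμmem k).1
  have hμf : ∀ k, f (μ k) = c k := fun k => (hμmem k).2
  obtain ⟨m, hmS, φ, hφ, hconv⟩ := (isCompact_stdSimplex ℝ (Fin n)).tendsto_subseq hμS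
  have hclim : Tendsto (fun j => c (φ j)) atTop (𝓝 (f lam)) := by
    rw [tendsto_iff_dist_tendsto_zero]
    refine squeeze_zero (fun j => dist_nonneg) (fun j => (hcd (φ j)).le) ?_
    exact tendsto_one_div_add_atTop_nhds_zero_nat.comp hφ.tendsto_atTop
  have hfm : f m = f lam := by
    have h1 : Tendsto (fun j => f (μ (φ j))) atTop (𝓝 (f m)) :=
      ((convComb_continuous x).continuousAt.tendsto).comp hconv
    simp only [hμf] at h1
    exact tendsto_nhds_unique h1 hclim
  have h1 : Tendsto (fun j => dist (μ (φ j)) lam) atTop (𝓝 (dist m lam)) :=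
    (hconv.dist tendsto_const_nhds)
  have hfar : ε ≤ dist m lam :=
    ge_of_tendsto' h1 fun j => hcfar _ _ (hμS _) (hμf _)
  set w : Fin n → ℝ := fun i => (lam i - m i)/2 with hw
  have hwsum : ∑ i, w i • x i = 0 := by
    have h2 : ∑ i, w i • x i
        = (2⁻¹:ℝ) • ((∑ i, lam i • x i) - ∑ i, m i • x i) := by
      rw [smul_sub, Finset.smul_sum, Finset.smul_sum, ← Finset.sum_sub_distrib]
      refine Finset.sum_congr rfl fun i _ => ?_
      rw [← smul_sub, hw]
      simp only [div_eq_inv_mul, mul_smul]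
      rw [sub_smul]
    rw [h2]
    have : (∑ i, m i • x i) = ∑ i, lam i • x i := hfm
    rw [← this]
    simp
  have hνf : ∀ j, f (μ (φ j) + w) = c (φ j) := by
    intro j
    have : f (μ (φ j) + w) = f (μ (φ j)) + ∑ i, w i • x i := by
      simp only [hf, Pi.add_apply, add_smul, Finset.sum_add_distrib]
    rw [this, hwsum, add_zero, hμf]
  have hνS : ∀ᶠ j in atTop, (μ (φ j) + w) ∈ stdSimplex ℝ (Fin n) := by
    have hsum : ∀ j, ∑ i, (μ (φ j) + w) i = 1 := by
      intro j
      simp only [Pi.add_apply, Finset.sum_add_distrib, (hμS (φ j)).2, hw]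
      have : ∑ i, (lam i - m i)/2 = 0 := by
        rw [← Finset.sum_div, Finset.sum_sub_distrib, hlam.2, hmS.2]
        norm_num
      rw [this, add_zero]
    have hnn : ∀ᶠ j in atTop, ∀ i, 0 ≤ (μ (φ j) + w) i := by
      rw [eventually_all]
      intro i
      rcases eq_or_lt_of_le (hmS.1 i) with hmi | hmi
      · filter_upwards with j
        simp only [Pi.add_apply, hw, ← hmi]
        have := (hμS (φ j)).1 i
        have := hlam.1 i
        simp only [sub_zero] at *
        linarith
      · have hco : Tendsto (fun j => μ (φ j) i) atTop (𝓝 (m i)) :=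
          (tendsto_pi_nhds.1 hconv) i
        filter_upwards [hco.eventually_const_lt (show m i / 2 < m i by linarith)] with j hj
        simp only [Pi.add_apply, hw]
        have := hlam.1 i
        linarith
    filter_upwards [hnn] with j hj
    exact ⟨hj, hsum j⟩
  have hle : ∀ᶠ j in atTop, dist (μ (φ j)) lam ≤ dist (μ (φ j) + w) lam := by
    filter_upwards [hνS] with j hj
    exact hμmin (φ j) _ ⟨hj, by simpa using hνf j⟩
  have h2 : Tendsto (fun j => dist (μ (φ j) + w) lam) atTop (𝓝 (dist (m + w) lam)) :=
    ((hconv.add_const w).dist tendsto_const_nhds)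
  have hfin : dist m lam ≤ dist (m + w) lam := le_of_tendsto_of_tendsto h1 h2 hle
  have hveq : m + w - lam = (2⁻¹:ℝ) • (m - lam) := by
    funext i
    simp only [Pi.sub_apply, Pi.add_apply, Pi.smul_apply, hw, smul_eq_mul]
    ring
  have hhalf : dist (m + w) lam = 2⁻¹ * dist m lam := by
    rw [dist_eq_norm, dist_eq_norm, hveq, norm_smul]
    simp [Real.norm_eq_abs]
  rw [hhalf] at hfin
  linarith

/-- The convex-combination map `λ ↦ ∑ᵢ λᵢ xᵢ` from the simplex
`Sₙ = {λ : λᵢ ≥ 0, ∑ λᵢ = 1}` onto `C = co{x₁,…,xₙ}` is an open map: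
the image of any relatively open subset of `Sₙ` is relatively open in `C`. -/
theorem convexCombination_isOpenMap {X : Type*} [NormedAddCommGroup X] [NormedSpace ℝ X]
    (n : ℕ) (x : Fin n → X) :
    ∀ U ⊆ {l : Fin n → ℝ | (∀ i, 0 ≤ l i) ∧ ∑ i, l i = 1},
      (∃ V : Set (Fin n → ℝ), IsOpen V ∧
        U = V ∩ {l : Fin n → ℝ | (∀ i, 0 ≤ l i) ∧ ∑ i, l i = 1}) →
      ∃ W : Set X, IsOpen W ∧
        (fun l : Fin n → ℝ => ∑ i, l i • x i) '' U = W ∩ convexHull ℝ (Set.range x) := by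
  intro U hUsub hex
  obtain ⟨V, hV, hUeq⟩ := hex
  set f := fun l : Fin n → ℝ => ∑ i, l i • x i with hf
  have hSsub : ∀ l ∈ U, l ∈ stdSimplex ℝ (Fin n) := fun l hl => hUsub hl
  have key : ∀ lam ∈ U, ∃ r > 0,
      Metric.ball (f lam) r ∩ convexHull ℝ (Set.range x) ⊆ f '' U := by
    intro lam hlam
    have hlamV : lam ∈ V := (hUeq ▸ hlam).1
    have hlamS : lam ∈ stdSimplex ℝ (Fin n) := hSsub lam hlam
    obtain ⟨ε, hε, hball⟩ := Metric.isOpen_iff.1 hV lam hlamV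
    obtain ⟨r, hr, hrp⟩ := convComb_open_at x lam hlamS hε
    refine ⟨r, hr, ?_⟩
    rintro y ⟨hy1, hy2⟩
    obtain ⟨μ, hμS, hμf, hμd⟩ := hrp y hy2 (by rwa [Metric.mem_ball] at hy1)
    refine ⟨μ, ?_, hμf⟩
    rw [hUeq]
    exact ⟨hball (Metric.mem_ball.2 hμd), hμS⟩
  choose! r hr hrsub using key
  refine ⟨⋃ lam ∈ U, Metric.ball (f lam) (r lam),
    isOpen_iUnion fun lam => isOpen_iUnion fun _ => Metric.isOpen_ball, ?_⟩
  apply Set.Subset.antisymm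
  · rintro y ⟨lam, hlam, rfl⟩
    refine ⟨Set.mem_iUnion₂.2 ⟨lam, hlam, Metric.mem_ball_self (hr lam hlam)⟩, ?_⟩
    rw [← convComb_image_stdSimplex x]
    exact ⟨lam, hSsub lam hlam, rfl⟩
  · rintro y ⟨hy1, hy2⟩
    obtain ⟨lam, hlam, hball⟩ := Set.mem_iUnion₂.1 hy1
    exact hrsub lam hlam ⟨hball, hy2⟩
end
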